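/- There is a function f : ℕ → ℕ such that for every integer k ≥ 1, every finite graph G, every linear order ≺ on V(G), and all sets X, Y, Z ⊆ V(G) with X disjoint from Y ∪ Z, the following holds: if the grid ranks of Adj_≺(G⟨X,Y⟩) and of Adj_≺(G⟨X,Z⟩) are both less than k, then the grid rank of Adj_≺(G⟨X, Y ∪ Z⟩) is less than f(k). -/

import Mathlib

/-- A `k`-division of a matrix whose rows are indexed by the linearly ordered type `I`
and whose columns are indexed by the linearly ordered type `J`: a partition of the rows
(resp. columns) into `k` consecutive intervals, encoded by a monotone surjection onto `Fin k`. -/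
structure Division (I J : Type*) [LinearOrder I] [LinearOrder J] (k : ℕ) where
  rowPart : I → Fin k
  colPart : J → Fin k
  rowMono : Monotone rowPart
  colMono : Monotone colPart
  rowSurj : Function.Surjective rowPart
  colSurj : Function.Surjective colPart

/-- The cell `(a, b)` of the division contains at least `q` pairwise distinct rows. -/
def Division.CellHasDistinctRows {I J : Type*} [LinearOrder I] [LinearOrder J] {k : ℕ}
    {α : Type*} (D : Division I J k) (M : I → J → α) (a b : Fin k) (q : ℕ) : Prop :=
  ∃ S : Finset I, q ≤ S.card ∧ (∀ i ∈ S, D.rowPart i = a) ∧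
    ∀ i ∈ S, ∀ i' ∈ S, i ≠ i' → ∃ j : J, D.colPart j = b ∧ M i j ≠ M i' j

/-- The cell `(a, b)` of the division contains at least `q` pairwise distinct columns. -/
def Division.CellHasDistinctCols {I J : Type*} [LinearOrder I] [LinearOrder J] {k : ℕ}
    {α : Type*} (D : Division I J k) (M : I → J → α) (a b : Fin k) (q : ℕ) : Prop :=
  ∃ S : Finset J, q ≤ S.card ∧ (∀ j ∈ S, D.colPart j = b) ∧
    ∀ j ∈ S, ∀ j' ∈ S, j ≠ j' → ∃ i : I, D.rowPart i = a ∧ M i j ≠ M i j'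

/-- The matrix `M` admits a rank-`k` division: a `k`-division each of whose cells has at
least `k` pairwise distinct rows or at least `k` pairwise distinct columns. -/
def HasRankDivision {I J : Type*} [LinearOrder I] [LinearOrder J] {α : Type*}
    (M : I → J → α) (k : ℕ) : Prop :=
  ∃ D : Division I J k, ∀ a b : Fin k,
    D.CellHasDistinctRows M a b k ∨ D.CellHasDistinctCols M a b k

/-- The grid rank of a matrix: the largest `k` such that `M` admits a rank-`k` division. -/
noncomputable def gridRank {I J : Type*} [LinearOrder I] [LinearOrder J] {α : Type*}
    (M : I → J → α) : ℕ :=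
  sSup {k : ℕ | HasRankDivision M k}

/-- The biadjacency matrix `Adj_≺(G⟨X,Y⟩)` of a graph `G` along a linear order of its
vertices: columns are indexed by `X` and rows by `Y`, each in increasing order, with entry
at `(y, x)` recording whether `x` and `y` are adjacent. -/
def biadjMatrix {V : Type*} [LinearOrder V] (G : SimpleGraph V) (X Y : Finset V) :
    {v // v ∈ Y} → {v // v ∈ X} → Prop :=
  fun y x => G.Adj y.1 x.1



section Helpers

/-- Representatives: a subset of `S` on which `f` is injective, of the size of the image. -/
lemma exists_reps {β γ : Type*} [DecidableEq β] [DecidableEq γ] (f : β → γ) (S : Finset β) :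
    ∃ T : Finset β, T ⊆ S ∧ T.card = (S.image f).card ∧ Set.InjOn f T := by
  classical
  choose rep hrepS hrepf using fun (w : {x // x ∈ S.image f}) => Finset.mem_image.mp w.2
  refine ⟨(S.image f).attach.image rep, ?_, ?_, ?_⟩
  · intro x hx
    obtain ⟨w, _, rfl⟩ := Finset.mem_image.mp hx
    exact hrepS w
  · rw [Finset.card_image_of_injOn, Finset.card_attach]
    intro w _ w' _ hww
    apply Subtype.ext
    rw [← hrepf w, ← hrepf w', hww]
  · intro x hx y hy hxy
    obtain ⟨w, _, rfl⟩ := Finset.mem_image.mp (Finset.mem_coe.mp hx)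
    obtain ⟨w', _, rfl⟩ := Finset.mem_image.mp (Finset.mem_coe.mp hy)
    have : w = w' := Subtype.ext (by rw [← hrepf w, ← hrepf w', hxy])
    rw [this]

/-- Core halving induction for bipartite Ramsey. -/
lemma ramsey_core {β γ : Type*} [DecidableEq β] [DecidableEq γ] (g : β → γ → Bool) :
    ∀ (t m : ℕ) (R : Finset β) (C : Finset γ), t ≤ C.card → m * 2 ^ t ≤ R.card →
    ∃ (R' : Finset β) (cs : Finset γ), R' ⊆ R ∧ cs ⊆ C ∧ cs.card = t ∧ m ≤ R'.card ∧
      ∀ c ∈ cs, (∀ r ∈ R', g r c = true) ∨ (∀ r ∈ R', g r c = false) := by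
  intro t
  induction t with
  | zero =>
    intro m R C _ hR
    exact ⟨R, ∅, Finset.Subset.rfl, Finset.empty_subset _, rfl, by simpa using hR, by simp⟩
  | succ t ih =>
    intro m R C hC hR
    obtain ⟨c, hc⟩ : ∃ c, c ∈ C := Finset.card_pos.mp (by omega)
    have hsplit : (R.filter fun r => g r c = true).card
        + (R.filter fun r => ¬ (g r c = true)).card = R.card :=
      Finset.card_filter_add_card_filter_not _
    have hpow : m * 2 ^ (t + 1) = m * 2 ^ t + m * 2 ^ t := by ring
    have hhalf : m * 2 ^ t ≤ (R.filter fun r => g r c = true).card ∨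
        m * 2 ^ t ≤ (R.filter fun r => ¬ (g r c = true)).card := by omega
    have hCerase : t ≤ (C.erase c).card := by
      rw [Finset.card_erase_of_mem hc]; omega
    rcases hhalf with h | h
    · obtain ⟨R', cs, hsub, hsubC, hcard, hm, hcol⟩ := ih m _ (C.erase c) hCerase h
      have hcnot : c ∉ cs := fun hx => (Finset.mem_erase.mp (hsubC hx)).1 rfl
      refine ⟨R', insert c cs, hsub.trans (Finset.filter_subset _ _),
        Finset.insert_subset hc (hsubC.trans (Finset.erase_subset _ _)),
        by rw [Finset.card_insert_of_notMem hcnot, hcard], hm, ?_⟩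
      intro c' hc'
      rcases Finset.mem_insert.mp hc' with rfl | hc'
      · exact Or.inl fun r hr => (Finset.mem_filter.mp (hsub hr)).2
      · exact hcol c' hc'
    · obtain ⟨R', cs, hsub, hsubC, hcard, hm, hcol⟩ := ih m _ (C.erase c) hCerase h
      have hcnot : c ∉ cs := fun hx => (Finset.mem_erase.mp (hsubC hx)).1 rfl
      refine ⟨R', insert c cs, hsub.trans (Finset.filter_subset _ _),
        Finset.insert_subset hc (hsubC.trans (Finset.erase_subset _ _)),
        by rw [Finset.card_insert_of_notMem hcnot, hcard], hm, ?_⟩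
      intro c' hc'
      rcases Finset.mem_insert.mp hc' with rfl | hc'
      · refine Or.inr fun r hr => ?_
        have := (Finset.mem_filter.mp (hsub hr)).2
        simpa using this
      · exact hcol c' hc'

/-- Bipartite Ramsey on a square grid. -/
lemma gridRamsey {m k : ℕ} (hk : 1 ≤ k) (hm : k * 2 ^ (2 * k) + 2 * k ≤ m)
    (g : Fin m → Fin m → Bool) :
    ∃ A B : Finset (Fin m), A.card = k ∧ B.card = k ∧
      ((∀ a ∈ A, ∀ b ∈ B, g a b = true) ∨ (∀ a ∈ A, ∀ b ∈ B, g a b = false)) := by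
  classical
  obtain ⟨R', cs, _, _, hcs, hR', hcol⟩ :=
    ramsey_core g (2 * k) k Finset.univ Finset.univ
      (by simpa using (by omega : 2 * k ≤ m)) (by simpa using (by omega : k * 2 ^ (2*k) ≤ m))
  have hsplit : (cs.filter fun c => ∀ r ∈ R', g r c = true).card
      + (cs.filter fun c => ¬ ∀ r ∈ R', g r c = true).card = cs.card :=
    Finset.card_filter_add_card_filter_not _
  obtain ⟨A, hAsub, hA⟩ := Finset.exists_subset_card_eq hR'
  have : k ≤ (cs.filter fun c => ∀ r ∈ R', g r c = true).card ∨
      k ≤ (cs.filter fun c => ¬ ∀ r ∈ R', g r c = true).card := by omega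
  rcases this with h | h
  · obtain ⟨B, hBsub, hB⟩ := Finset.exists_subset_card_eq h
    refine ⟨A, B, hA, hB, Or.inl fun a ha b hb => ?_⟩
    exact (Finset.mem_filter.mp (hBsub hb)).2 a (hAsub ha)
  · obtain ⟨B, hBsub, hB⟩ := Finset.exists_subset_card_eq h
    refine ⟨A, B, hA, hB, Or.inr fun a ha b hb => ?_⟩
    have hb' := Finset.mem_filter.mp (hBsub hb)
    rcases hcol b (Finset.filter_subset _ _ (hBsub hb)) with h1 | h1
    · exact absurd (fun r hr => h1 r hr) hb'.2
    · exact h1 a (hAsub ha)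

/-- Squashing map collapsing `Fin m` onto `Fin k` along a `k`-element subset `A`. -/
def squash {m k : ℕ} (hk : 0 < k) (A : Finset (Fin m)) (i : Fin m) : Fin k :=
  ⟨min (k - 1) ((A.filter fun x => x ≤ i).card - 1), by omega⟩

lemma squash_mono {m k : ℕ} (hk : 0 < k) (A : Finset (Fin m)) : Monotone (squash hk A) := by
  intro i i' h
  have hsub : (A.filter fun x => x ≤ i).card ≤ (A.filter fun x => x ≤ i').card :=
    Finset.card_le_card (Finset.monotone_filter_right A (fun x _ hx => le_trans hx h))
  simp only [squash, Fin.mk_le_mk]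
  omega

lemma squash_emb {m k : ℕ} (hk : 0 < k) {A : Finset (Fin m)} (h : A.card = k) (p : Fin k) :
    squash hk A (A.orderEmbOfFin h p) = p := by
  have himg : A.filter (fun x => x ≤ A.orderEmbOfFin h p)
      = (Finset.Iic p).image (A.orderEmbOfFin h) := by
    ext x
    simp only [Finset.mem_filter, Finset.mem_image, Finset.mem_Iic]
    constructor
    · rintro ⟨hxA, hxle⟩
      have : x ∈ Set.range (A.orderEmbOfFin h) := by
        rw [Finset.range_orderEmbOfFin]
        exact hxA
      obtain ⟨q, rfl⟩ := this
      exact ⟨q, (A.orderEmbOfFin h).le_iff_le.mp hxle, rfl⟩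
    · rintro ⟨q, hq, rfl⟩
      exact ⟨Finset.orderEmbOfFin_mem A h q, (A.orderEmbOfFin h).le_iff_le.mpr hq⟩
  have hcard : (A.filter fun x => x ≤ A.orderEmbOfFin h p).card = p.val + 1 := by
    rw [himg, Finset.card_image_of_injective _ (A.orderEmbOfFin h).injective, Fin.card_Iic]
  apply Fin.ext
  simp only [squash, hcard]
  have := p.isLt
  omega

section Main2

set_option linter.unusedSectionVars false


variable {I I' I'' J : Type*} [LinearOrder I] [LinearOrder I'] [LinearOrder I'']
  [LinearOrder J] {α : Type*}

/-- A cell of a division of the big matrix that is good relative to the sub-row-type `I'`. -/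
def GoodCell {m : ℕ} (D : Division I J m) (ι : I' → I) (N : I' → J → α) (k : ℕ)
    (a b : Fin m) : Prop :=
  (∃ S : Finset I', k ≤ S.card ∧ (∀ i ∈ S, D.rowPart (ι i) = a) ∧
     ∀ i ∈ S, ∀ i' ∈ S, i ≠ i' → ∃ j : J, D.colPart j = b ∧ N i j ≠ N i' j) ∨
  (∃ S : Finset J, k ≤ S.card ∧ (∀ j ∈ S, D.colPart j = b) ∧
     ∀ j ∈ S, ∀ j' ∈ S, j ≠ j' → ∃ i : I', D.rowPart (ι i) = a ∧ N i j ≠ N i j')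

lemma transfer {m k : ℕ} (hk : 2 ≤ k) (D : Division I J m) (ι : I' → I) (hι : Monotone ι)
    (N : I' → J → α) {A B : Finset (Fin m)} (hA : A.card = k) (hB : B.card = k)
    (hall : ∀ a ∈ A, ∀ b ∈ B, GoodCell D ι N k a b) : HasRankDivision N k := by
  have hk0 : 0 < k := by omega
  refine ⟨⟨fun i => squash hk0 A (D.rowPart (ι i)), fun j => squash hk0 B (D.colPart j),
    (squash_mono hk0 A).comp (D.rowMono.comp hι), (squash_mono hk0 B).comp D.colMono,
    ?_, ?_⟩, ?_⟩
  · intro p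
    have hgood := hall (A.orderEmbOfFin hA p) (Finset.orderEmbOfFin_mem A hA p)
      (B.orderEmbOfFin hB ⟨0, hk0⟩) (Finset.orderEmbOfFin_mem B hB _)
    rcases hgood with ⟨S, hcard, hrow, _⟩ | ⟨S, hcard, _, hpair⟩
    · obtain ⟨i, hi⟩ := Finset.card_pos.mp (by omega : 0 < S.card)
      exact ⟨i, by show squash hk0 A (D.rowPart (ι i)) = p; rw [hrow i hi]; exact squash_emb hk0 hA p⟩
    · obtain ⟨j, hj, j', hj', hne⟩ := Finset.one_lt_card.mp (by omega : 1 < S.card)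
      obtain ⟨i, hi, _⟩ := hpair j hj j' hj' hne
      exact ⟨i, by show squash hk0 A (D.rowPart (ι i)) = p; rw [hi]; exact squash_emb hk0 hA p⟩
  · intro q
    obtain ⟨j, hj⟩ := D.colSurj (B.orderEmbOfFin hB q)
    exact ⟨j, by show squash hk0 B (D.colPart j) = q; rw [hj]; exact squash_emb hk0 hB q⟩
  · intro p q
    have hgood := hall (A.orderEmbOfFin hA p) (Finset.orderEmbOfFin_mem A hA p)
      (B.orderEmbOfFin hB q) (Finset.orderEmbOfFin_mem B hB q)
    rcases hgood with ⟨S, hcard, hrow, hpair⟩ | ⟨S, hcard, hcol, hpair⟩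
    · refine Or.inl ⟨S, hcard, fun i hi => by show squash hk0 A (D.rowPart (ι i)) = p; rw [hrow i hi]; exact squash_emb hk0 hA p, ?_⟩
      intro i hi i' hi' hne
      obtain ⟨j, hjb, hMj⟩ := hpair i hi i' hi' hne
      exact ⟨j, by show squash hk0 B (D.colPart j) = q; rw [hjb]; exact squash_emb hk0 hB q, hMj⟩
    · refine Or.inr ⟨S, hcard, fun j hj => by show squash hk0 B (D.colPart j) = q; rw [hcol j hj]; exact squash_emb hk0 hB q, ?_⟩
      intro j hj j' hj' hne
      obtain ⟨i, hia, hMi⟩ := hpair j hj j' hj' hne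
      exact ⟨i, by show squash hk0 A (D.rowPart (ι i)) = p; rw [hia]; exact squash_emb hk0 hA p, hMi⟩

lemma percell {m k : ℕ} (hk : 1 ≤ k) (D : Division I J m)
    (ιY : I' → I) (ιZ : I'' → I) (hYinj : Function.Injective ιY)
    (hZinj : Function.Injective ιZ)
    (M : I → J → α) (MY : I' → J → α) (MZ : I'' → J → α)
    (cover : ∀ i : I, (∃ y, ιY y = i) ∨ (∃ z, ιZ z = i))
    (hMY : ∀ y j, M (ιY y) j = MY y j) (hMZ : ∀ z j, M (ιZ z) j = MZ z j)
    (hm1 : 2 * k ≤ m) (hm2 : (k - 1) * (k - 1) < m)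
    (a b : Fin m) (hcell : D.CellHasDistinctRows M a b m ∨ D.CellHasDistinctCols M a b m) :
    GoodCell D ιY MY k a b ∨ GoodCell D ιZ MZ k a b := by
  classical
  rcases hcell with ⟨S, hSc, hSrow, hSpair⟩ | ⟨S, hSc, hScol, hSpair⟩
  · -- rows case
    set SY := S.filter (fun i => ∃ y, ιY y = i) with hSYdef
    set SZ := S.filter (fun i => ∃ z, ιZ z = i) with hSZdef
    have hcover : S ⊆ SY ∪ SZ := by
      intro i hi
      rcases cover i with h | h
      · exact Finset.mem_union_left _ (Finset.mem_filter.mpr ⟨hi, h⟩)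
      · exact Finset.mem_union_right _ (Finset.mem_filter.mpr ⟨hi, h⟩)
    have hcards : S.card ≤ SY.card + SZ.card :=
      le_trans (Finset.card_le_card hcover) (Finset.card_union_le _ _)
    have hsplit : k ≤ SY.card ∨ k ≤ SZ.card := by omega
    rcases hsplit with h | h
    · left; left
      set T := SY.preimage ιY (hYinj.injOn) with hTdef
      have hTim : T.image ιY = SY := by
        ext x
        simp only [hTdef, Finset.mem_image, Finset.mem_preimage]
        constructor
        · rintro ⟨y, hy, rfl⟩; exact hy
        · intro hx
          obtain ⟨y, rfl⟩ := (Finset.mem_filter.mp hx).2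
          exact ⟨y, hx, rfl⟩
      have hTcard : k ≤ T.card := by
        have := Finset.card_image_le (s := T) (f := ιY)
        rw [hTim] at this
        omega
      refine ⟨T, hTcard, ?_, ?_⟩
      · intro y hy
        have := Finset.mem_preimage.mp hy
        exact hSrow _ (Finset.filter_subset _ _ this)
      · intro y hy y' hy' hne
        have h1 := Finset.filter_subset _ _ (Finset.mem_preimage.mp hy)
        have h2 := Finset.filter_subset _ _ (Finset.mem_preimage.mp hy')
        obtain ⟨j, hjb, hMne⟩ := hSpair _ h1 _ h2 (fun hh => hne (hYinj hh))
        exact ⟨j, hjb, by rw [← hMY, ← hMY]; exact hMne⟩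
    · right; left
      set T := SZ.preimage ιZ (hZinj.injOn) with hTdef
      have hTim : T.image ιZ = SZ := by
        ext x
        simp only [hTdef, Finset.mem_image, Finset.mem_preimage]
        constructor
        · rintro ⟨y, hy, rfl⟩; exact hy
        · intro hx
          obtain ⟨y, rfl⟩ := (Finset.mem_filter.mp hx).2
          exact ⟨y, hx, rfl⟩
      have hTcard : k ≤ T.card := by
        have := Finset.card_image_le (s := T) (f := ιZ)
        rw [hTim] at this
        omega
      refine ⟨T, hTcard, ?_, ?_⟩
      · intro z hz
        have := Finset.mem_preimage.mp hz
        exact hSrow _ (Finset.filter_subset _ _ this)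
      · intro z hz z' hz' hne
        have h1 := Finset.filter_subset _ _ (Finset.mem_preimage.mp hz)
        have h2 := Finset.filter_subset _ _ (Finset.mem_preimage.mp hz')
        obtain ⟨j, hjb, hMne⟩ := hSpair _ h1 _ h2 (fun hh => hne (hZinj hh))
        exact ⟨j, hjb, by rw [← hMZ, ← hMZ]; exact hMne⟩
  · -- cols case
    set wY : J → (I' → Option α) :=
      fun j y => if D.rowPart (ιY y) = a then some (MY y j) else none with hwY
    set wZ : J → (I'' → Option α) :=
      fun j z => if D.rowPart (ιZ z) = a then some (MZ z j) else none with hwZ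
    have key : ∀ j ∈ S, ∀ j' ∈ S, j ≠ j' → wY j ≠ wY j' ∨ wZ j ≠ wZ j' := by
      intro j hj j' hj' hne
      obtain ⟨i, hia, hMne⟩ := hSpair j hj j' hj' hne
      rcases cover i with ⟨y, rfl⟩ | ⟨z, rfl⟩
      · left
        intro heq
        have h1 := congrFun heq y
        rw [hwY] at h1
        simp only [if_pos hia] at h1
        apply hMne
        rw [hMY, hMY]
        exact Option.some.inj h1
      · right
        intro heq
        have h1 := congrFun heq z
        rw [hwZ] at h1
        simp only [if_pos hia] at h1
        apply hMne
        rw [hMZ, hMZ]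
        exact Option.some.inj h1
    have hinj2 : Set.InjOn (fun j => (wY j, wZ j)) S := by
      intro j hj j' hj' heq
      by_contra hne
      rcases key j (Finset.mem_coe.mp hj) j' (Finset.mem_coe.mp hj') hne with h | h
      · exact h (congrArg Prod.fst heq)
      · exact h (congrArg Prod.snd heq)
    have hprod : S.card ≤ (S.image wY).card * (S.image wZ).card := by
      calc S.card = (S.image fun j => (wY j, wZ j)).card :=
            (Finset.card_image_of_injOn hinj2).symm
        _ ≤ ((S.image wY) ×ˢ (S.image wZ)).card := by
            apply Finset.card_le_card
            intro x hx
            obtain ⟨j, hj, rfl⟩ := Finset.mem_image.mp hx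
            exact Finset.mem_product.mpr
              ⟨Finset.mem_image_of_mem _ hj, Finset.mem_image_of_mem _ hj⟩
        _ = _ := Finset.card_product _ _
    have hbig : k ≤ (S.image wY).card ∨ k ≤ (S.image wZ).card := by
      by_contra hcon
      push_neg at hcon
      have : S.card ≤ (k - 1) * (k - 1) :=
        le_trans hprod (Nat.mul_le_mul (by omega) (by omega))
      omega
    rcases hbig with h | h
    · left; right
      obtain ⟨T, hTS, hTcard, hTinj⟩ := exists_reps wY S
      refine ⟨T, by omega, fun j hj => hScol j (hTS hj), ?_⟩
      intro j hj j' hj' hne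
      have hwne : wY j ≠ wY j' := fun he => hne (hTinj hj hj' he)
      obtain ⟨y, hy⟩ := Function.ne_iff.mp hwne
      by_cases hya : D.rowPart (ιY y) = a
      · refine ⟨y, hya, fun he => hy ?_⟩
        rw [hwY]
        simp only [if_pos hya, he]
      · exact absurd (by rw [hwY]; simp only [if_neg hya]) hy
    · right; right
      obtain ⟨T, hTS, hTcard, hTinj⟩ := exists_reps wZ S
      refine ⟨T, by omega, fun j hj => hScol j (hTS hj), ?_⟩
      intro j hj j' hj' hne
      have hwne : wZ j ≠ wZ j' := fun he => hne (hTinj hj hj' he)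
      obtain ⟨z, hz⟩ := Function.ne_iff.mp hwne
      by_cases hza : D.rowPart (ιZ z) = a
      · refine ⟨z, hza, fun he => hz ?_⟩
        rw [hwZ]
        simp only [if_pos hza, he]
      · exact absurd (by rw [hwZ]; simp only [if_neg hza]) hz

lemma mainlem {k m : ℕ} (hk : 2 ≤ k) (hm : k * 2 ^ (2 * k) + k * k + 2 * k ≤ m)
    (M : I → J → α) (MY : I' → J → α) (MZ : I'' → J → α)
    (ιY : I' → I) (ιZ : I'' → I) (hY : StrictMono ιY) (hZ : StrictMono ιZ)
    (cover : ∀ i : I, (∃ y, ιY y = i) ∨ (∃ z, ιZ z = i))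
    (hMY : ∀ y j, M (ιY y) j = MY y j) (hMZ : ∀ z j, M (ιZ z) j = MZ z j)
    (hD : HasRankDivision M m) : HasRankDivision MY k ∨ HasRankDivision MZ k := by
  classical
  obtain ⟨D, hcell⟩ := hD
  have hkk : (k - 1) * (k - 1) ≤ k * k := Nat.mul_le_mul (Nat.sub_le _ _) (Nat.sub_le _ _)
  have h1 : 1 ≤ k * 2 ^ (2 * k) := Nat.one_le_iff_ne_zero.mpr
    (Nat.mul_ne_zero (by omega) (Nat.pos_iff_ne_zero.mp (Nat.two_pow_pos _)))
  have hper : ∀ a b, GoodCell D ιY MY k a b ∨ GoodCell D ιZ MZ k a b := fun a b =>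
    percell (by omega) D ιY ιZ hY.injective hZ.injective M MY MZ cover hMY hMZ
      (by omega) (by omega) a b (hcell a b)
  set g : Fin m → Fin m → Bool := fun a b => if GoodCell D ιY MY k a b then true else false
    with hg
  obtain ⟨A, B, hA, hB, hAB⟩ := gridRamsey (by omega : 1 ≤ k) (by omega) g
  rcases hAB with htrue | hfalse
  · left
    refine transfer hk D ιY hY.monotone MY hA hB (fun a ha b hb => ?_)
    have := htrue a ha b hb
    by_contra hcon
    rw [hg] at this
    simp only [if_neg hcon] at this
    exact Bool.noConfusion this
  · right
    refine transfer hk D ιZ hZ.monotone MZ hA hB (fun a ha b hb => ?_)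
    have hgf := hfalse a ha b hb
    have hnot : ¬ GoodCell D ιY MY k a b := by
      intro h
      rw [hg] at hgf
      simp only [if_pos h] at hgf
      exact Bool.noConfusion hgf
    exact (hper a b).resolve_left hnot


end Main2

lemma bddAbove_rank {I J : Type*} [LinearOrder I] [LinearOrder J] [Fintype J] {α : Type*}
    (M : I → J → α) : BddAbove {n | HasRankDivision M n} := by
  refine ⟨Fintype.card J, fun n hn => ?_⟩
  obtain ⟨D, _⟩ := hn
  simpa using Fintype.card_le_of_surjective D.colPart D.colSurj

lemma le_gridRank {I J : Type*} [LinearOrder I] [LinearOrder J] [Fintype J] {α : Type*}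
    {M : I → J → α} {n : ℕ} (h : HasRankDivision M n) : n ≤ gridRank M :=
  le_csSup (bddAbove_rank M) h

lemma hasRank_one {I J : Type*} [LinearOrder I] [LinearOrder J] {α : Type*}
    (M : I → J → α) (hI : Nonempty I) (hJ : Nonempty J) : HasRankDivision M 1 := by
  obtain ⟨i0⟩ := hI
  obtain ⟨j0⟩ := hJ
  refine ⟨⟨fun _ => 0, fun _ => 0, monotone_const, monotone_const,
    fun q => ⟨i0, Subsingleton.elim _ _⟩, fun q => ⟨j0, Subsingleton.elim _ _⟩⟩, ?_⟩
  intro a b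
  left
  refine ⟨{i0}, by simp, fun i _ => Subsingleton.elim _ _, ?_⟩
  intro i hi i' hi' hne
  simp only [Finset.mem_singleton] at hi hi'
  exact absurd (hi.trans hi'.symm) hne

end Helpers

/-- There is a function `f : ℕ → ℕ` such that for every `k ≥ 1`, every finite
graph `G`, every linear order on `V(G)`, and all sets `X, Y, Z ⊆ V(G)` with `X` disjoint
from `Y ∪ Z`: if the grid ranks of `Adj_≺(G⟨X,Y⟩)` and `Adj_≺(G⟨X,Z⟩)` are both less than
`k`, then the grid rank of `Adj_≺(G⟨X, Y ∪ Z⟩)` is less than `f k`. -/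
theorem stmt0 :
    ∃ f : ℕ → ℕ, ∀ k : ℕ, 1 ≤ k →
      ∀ (V : Type) [Fintype V] [LinearOrder V] [DecidableEq V]
        (G : SimpleGraph V) (X Y Z : Finset V),
        Disjoint X (Y ∪ Z) →
        gridRank (biadjMatrix G X Y) < k →
        gridRank (biadjMatrix G X Z) < k →
        gridRank (biadjMatrix G X (Y ∪ Z)) < f k := by
  classical
  refine ⟨fun k => k * 2 ^ (2 * k) + k * k + 2 * k, ?_⟩
  intro k hk V _ _ _ G X Y Z _ hgY hgZ
  by_contra hcon
  push_neg at hcon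
  set MU := biadjMatrix G X (Y ∪ Z) with hMUdef
  have hbddU : BddAbove {n | HasRankDivision MU n} := bddAbove_rank MU
  have hne : {n | HasRankDivision MU n}.Nonempty := by
    by_contra h
    rw [Set.not_nonempty_iff_eq_empty] at h
    have h0 : gridRank MU = 0 := by
      rw [gridRank, h, csSup_empty]
      rfl
    have h1 : 1 ≤ k * 2 ^ (2 * k) := Nat.one_le_iff_ne_zero.mpr
      (Nat.mul_ne_zero (by omega) (Nat.pos_iff_ne_zero.mp (Nat.two_pow_pos _)))
    omega
  have hmem : HasRankDivision MU (gridRank MU) := Nat.sSup_mem hne hbddU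
  -- the inclusion maps
  set ιY : {v // v ∈ Y} → {v // v ∈ Y ∪ Z} :=
    fun y => ⟨y.1, Finset.mem_union_left Z y.2⟩ with hιY
  set ιZ : {v // v ∈ Z} → {v // v ∈ Y ∪ Z} :=
    fun z => ⟨z.1, Finset.mem_union_right Y z.2⟩ with hιZ
  have hYmono : StrictMono ιY := by
    intro a b h
    exact Subtype.mk_lt_mk.mpr (Subtype.coe_lt_coe.mpr h)
  have hZmono : StrictMono ιZ := by
    intro a b h
    exact Subtype.mk_lt_mk.mpr (Subtype.coe_lt_coe.mpr h)
  have cover : ∀ i : {v // v ∈ Y ∪ Z}, (∃ y, ιY y = i) ∨ (∃ z, ιZ z = i) := by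
    intro i
    rcases Finset.mem_union.mp i.2 with h | h
    · exact Or.inl ⟨⟨i.1, h⟩, Subtype.ext rfl⟩
    · exact Or.inr ⟨⟨i.1, h⟩, Subtype.ext rfl⟩
  rcases le_or_gt 2 k with hk2 | hk1
  · have := mainlem hk2 hcon MU (biadjMatrix G X Y) (biadjMatrix G X Z) ιY ιZ
      hYmono hZmono cover (fun y j => rfl) (fun z j => rfl) hmem
    rcases this with h | h
    · exact absurd (le_gridRank h) (by omega)
    · exact absurd (le_gridRank h) (by omega)
  · -- k = 1
    have hk1' : k = 1 := by omega
    subst hk1'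
    obtain ⟨D, _⟩ := hmem
    have hn : 0 < gridRank MU := by
      have : (7 : ℕ) ≤ gridRank MU := by norm_num at hcon ⊢; omega
      omega
    obtain ⟨i0, -⟩ := D.rowSurj ⟨0, hn⟩
    obtain ⟨j0, -⟩ := D.colSurj ⟨0, hn⟩
    rcases Finset.mem_union.mp i0.2 with h | h
    · have h1 : HasRankDivision (biadjMatrix G X Y) 1 :=
        hasRank_one _ ⟨⟨i0.1, h⟩⟩ ⟨j0⟩
      exact absurd (le_gridRank h1) (by omega)
    · have h1 : HasRankDivision (biadjMatrix G X Z) 1 :=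
        hasRank_one _ ⟨⟨i0.1, h⟩⟩ ⟨j0⟩
      exact absurd (le_gridRank h1) (by omega)
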